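/- arXiv:0908.2185 — 3 statements merged into one kernel-verified Lean document; each statement's English description precedes it below -/
import Mathlib

section
/- For each i ∈ {1,…,m−1}, the map q_{m,i}(L_1,…,L_m) := (L_1,…,L_{i−1}, zL_{i+2},…, zL_m) is a well-defined surjection from X_{m,i} onto Y_{m−2}. -/
open scoped ComplexInnerProductSpace

noncomputable section

abbrev E (N : ℕ) := EuclideanSpace ℂ (Fin N ⊕ Fin N)

def zmap (N : ℕ) : E N →ₗ[ℂ] E N where
  toFun v := WithLp.toLp 2 fun i =>
    match i with
    | Sum.inl j => if h : (j : ℕ) + 1 < N then v (Sum.inl ⟨(j : ℕ) + 1, h⟩) else 0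
    | Sum.inr j => if h : (j : ℕ) + 1 < N then v (Sum.inr ⟨(j : ℕ) + 1, h⟩) else 0
  map_add' u v := by
    ext i
    rcases i with j | j <;> simp only [PiLp.add_apply] <;> split <;> simp
  map_smul' c v := by
    ext i
    rcases i with j | j <;> simp only [PiLp.smul_apply, RingHom.id_apply, smul_eq_mul] <;>
      split <;> simp

def Cmap (N : ℕ) : E N →ₗ[ℂ] EuclideanSpace ℂ (Fin 2) where
  toFun v := WithLp.toLp 2 fun i => if i = 0 then ∑ j : Fin N, v (Sum.inl j) else ∑ j : Fin N, v (Sum.inr j)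
  map_add' u v := by
    ext i
    by_cases h : i = (0 : Fin 2) <;> simp [h, PiLp.add_apply, Finset.sum_add_distrib]
  map_smul' c v := by
    ext i
    by_cases h : i = (0 : Fin 2) <;> simp [h, PiLp.smul_apply, Finset.mul_sum]

/-- `Ym N m` : complete flags `0 = L_0 ⊊ L_1 ⊊ … ⊊ L_m` of `z`-stable subspaces of `E`
with `dim L_j = j`.  A tuple `(L_1,…,L_m) ∈ Y_m` is encoded as the function
`L : Fin (m+1) → Submodule ℂ (E N)` with the convention `L 0 = 0`. -/
def Ym (N m : ℕ) : Set (Fin (m + 1) → Submodule ℂ (E N)) :=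
  {L | L 0 = ⊥ ∧ StrictMono L ∧ (∀ j : Fin (m + 1), Module.finrank ℂ (L j) = (j : ℕ)) ∧
    ∀ j : Fin (m + 1), (L j).map (zmap N) ≤ L j}

/-- The map `φ_m`, in coordinates: `φ_m(L)_j = C(L_{j+1} ∩ L_j^⊥)` (0-based `j`),
i.e. the tuple `(C(L_1), C(L_2 ∩ L_1^⊥), …, C(L_m ∩ L_{m-1}^⊥))`. -/
def phiRaw (N m : ℕ) (L : Fin (m + 1) → Submodule ℂ (E N)) :
    Fin m → Submodule ℂ (EuclideanSpace ℂ (Fin 2)) :=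
  fun j => ((L j.succ) ⊓ (L j.castSucc)ᗮ).map (Cmap N)

/-- `X_{m,i} = {(L_1,…,L_m) ∈ Y_m : L_{i+1} = z^{-1}(L_{i-1})}` (with `L_0 = 0`). -/
def Xmi (N m i : ℕ) : Set (Fin (m + 1) → Submodule ℂ (E N)) :=
  {L | L ∈ Ym N m ∧ ∀ (h : i + 1 < m + 1) (h' : i - 1 < m + 1),
    L ⟨i + 1, h⟩ = (L ⟨i - 1, h'⟩).comap (zmap N)}

/-- `A_{m,i} = {(l_1,…,l_m) ∈ (ℙ¹)^m : l_{i+1} = l_i^⊥}`; a point of `(ℙ¹)^m` is encoded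
as a tuple of rank-one subspaces of `ℂ²`, the line `l_k` sitting at 0-based index `k-1`. -/
def Ami (m i : ℕ) : Set (Fin m → Submodule ℂ (EuclideanSpace ℂ (Fin 2))) :=
  {l | (∀ j, Module.finrank ℂ (l j) = 1) ∧
    ∀ (h : i < m) (h' : i - 1 < m), l ⟨i, h⟩ = (l ⟨i - 1, h'⟩)ᗮ}

/-- `q_{m,i}(L_1,…,L_m) = (L_1,…,L_{i-1}, zL_{i+2},…,zL_m)`. -/
def qRaw (N m i : ℕ) (hm : 2 ≤ m) (L : Fin (m + 1) → Submodule ℂ (E N)) :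
    Fin (m - 2 + 1) → Submodule ℂ (E N) :=
  fun j =>
    if (j : ℕ) < i then L ⟨(j : ℕ), by have := j.isLt; omega⟩
    else (L ⟨(j : ℕ) + 2, by have := j.isLt; omega⟩).map (zmap N)

/-- The forgetful map `g_{m,i}(l_1,…,l_m) = (l_1,…,l_{i-1}, l_{i+2},…,l_m)`. -/
def gRaw (m i : ℕ) (l : Fin m → Submodule ℂ (EuclideanSpace ℂ (Fin 2))) :
    Fin (m - 2) → Submodule ℂ (EuclideanSpace ℂ (Fin 2)) :=
  fun k =>
    if (k : ℕ) + 1 < i then l ⟨(k : ℕ), by have := k.isLt; omega⟩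
    else l ⟨(k : ℕ) + 2, by have := k.isLt; omega⟩

/-- The involution `I_{2n}` of `(ℙ¹)^m`: `l_j ↦ l_j` for `j` odd, `l_j ↦ l_j^⊥` for `j` even
(the line `l_j` sits at 0-based index `j-1`). -/
def Imap (m : ℕ) (l : Fin m → Submodule ℂ (EuclideanSpace ℂ (Fin 2))) :
    Fin m → Submodule ℂ (EuclideanSpace ℂ (Fin 2)) :=
  fun k => if (k : ℕ) % 2 = 0 then l k else (l k)ᗮ

/-- A crossingless matching of the `2n` points `{1,…,2n}`: a partition of `{1,…,2n}` into
`n` pairs (each pair recorded as `(i,j)` with `i < j`) such that there is no quadruple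
`i < j < k < l` with `(i,k)` and `(j,l)` paired. -/
structure CrossinglessMatching (n : ℕ) where
  pairs : Finset (ℕ × ℕ)
  card_eq : pairs.card = n
  lt : ∀ p ∈ pairs, p.1 < p.2
  mem_range : ∀ p ∈ pairs, 1 ≤ p.1 ∧ p.2 ≤ 2 * n
  cover : ∀ k, 1 ≤ k → k ≤ 2 * n → ∃! p, p ∈ pairs ∧ (p.1 = k ∨ p.2 = k)
  noncross : ∀ i j k l : ℕ, i < j → j < k → k < l → (i, k) ∈ pairs → (j, l) ∉ pairs

open Fin.NatCast in
/-- `{(L_1,…,L_m) ∈ Y_m : L_{s_a(j)} = z^{-d_a(j)} L_{j-1} for all j ∈ O_a}`, where for a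
pair `(i,j)` of the matching, `s_a(i) = j`, `d_a(i) = (j-i+1)/2`, and `z^{-d}` is the
`d`-fold preimage under `z`. -/
def KaSet (N m : ℕ) (pairs : Finset (ℕ × ℕ)) : Set (Fin (m + 1) → Submodule ℂ (E N)) :=
  {L | L ∈ Ym N m ∧ ∀ p ∈ pairs,
    L ((p.2 : Fin (m + 1))) =
      (L ((p.1 - 1 : ℕ) : Fin (m + 1))).comap ((zmap N) ^ ((p.2 - p.1 + 1) / 2))}

/-- `S_a = {(l_1,…,l_{2n}) ∈ (ℙ¹)^{2n} : l_{s_a(j)} = l_j ∀ j ∈ O_a}` (0-based indexing, so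
`l_k` sits at index `k-1`). -/
def SaSet (m : ℕ) (pairs : Finset (ℕ × ℕ)) :
    Set (Fin m → Submodule ℂ (EuclideanSpace ℂ (Fin 2))) :=
  {l | (∀ j, Module.finrank ℂ (l j) = 1) ∧
    ∀ p ∈ pairs, ∀ (h2 : p.2 - 1 < m) (h1 : p.1 - 1 < m), l ⟨p.2 - 1, h2⟩ = l ⟨p.1 - 1, h1⟩}

/-- `T_a = {(l_1,…,l_{2n}) ∈ (ℙ¹)^{2n} : l_{s_a(j)} = l_j^⊥ ∀ j ∈ O_a}`. -/
def TaSet (m : ℕ) (pairs : Finset (ℕ × ℕ)) :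
    Set (Fin m → Submodule ℂ (EuclideanSpace ℂ (Fin 2))) :=
  {l | (∀ j, Module.finrank ℂ (l j) = 1) ∧
    ∀ p ∈ pairs, ∀ (h2 : p.2 - 1 < m) (h1 : p.1 - 1 < m), l ⟨p.2 - 1, h2⟩ = (l ⟨p.1 - 1, h1⟩)ᗮ}

lemma zmap_apply_inl (N : ℕ) (v : E N) (j : Fin N) :
    zmap N v (Sum.inl j) = if h : (j : ℕ) + 1 < N then v (Sum.inl ⟨(j : ℕ) + 1, h⟩) else 0 := rfl

lemma zmap_apply_inr (N : ℕ) (v : E N) (j : Fin N) :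
    zmap N v (Sum.inr j) = if h : (j : ℕ) + 1 < N then v (Sum.inr ⟨(j : ℕ) + 1, h⟩) else 0 := rfl

lemma zmap_pow_apply_inl (N k : ℕ) (v : E N) (j : Fin N) :
    ((zmap N ^ k) v) (Sum.inl j) =
      if h : (j : ℕ) + k < N then v (Sum.inl ⟨(j : ℕ) + k, h⟩) else 0 := by
  induction k generalizing v with
  | zero => simp [pow_zero]
  | succ k ih =>
    rw [pow_succ, Module.End.mul_apply, ih]
    by_cases h : (j : ℕ) + (k + 1) < N
    · rw [dif_pos (by omega : (j : ℕ) + k < N), dif_pos h, zmap_apply_inl,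
        dif_pos (by simp; omega : ((⟨(j : ℕ) + k, by omega⟩ : Fin N) : ℕ) + 1 < N)]
      rfl
    · rw [dif_neg h]
      by_cases h2 : (j : ℕ) + k < N
      · rw [dif_pos h2, zmap_apply_inl, dif_neg (by simp; omega)]
      · rw [dif_neg h2]

lemma zmap_pow_apply_inr (N k : ℕ) (v : E N) (j : Fin N) :
    ((zmap N ^ k) v) (Sum.inr j) =
      if h : (j : ℕ) + k < N then v (Sum.inr ⟨(j : ℕ) + k, h⟩) else 0 := by
  induction k generalizing v with
  | zero => simp [pow_zero]
  | succ k ih =>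
    rw [pow_succ, Module.End.mul_apply, ih]
    by_cases h : (j : ℕ) + (k + 1) < N
    · rw [dif_pos (by omega : (j : ℕ) + k < N), dif_pos h, zmap_apply_inr,
        dif_pos (by simp; omega : ((⟨(j : ℕ) + k, by omega⟩ : Fin N) : ℕ) + 1 < N)]
      rfl
    · rw [dif_neg h]
      by_cases h2 : (j : ℕ) + k < N
      · rw [dif_pos h2, zmap_apply_inr, dif_neg (by simp; omega)]
      · rw [dif_neg h2]

lemma zmap_pow_N (N : ℕ) : (zmap N) ^ N = 0 := by
  ext v i
  rcases i with j | j
  · rw [zmap_pow_apply_inl, dif_neg (by omega)]; rfl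
  · rw [zmap_pow_apply_inr, dif_neg (by omega)]; rfl


def iota (N : ℕ) : EuclideanSpace ℂ (Fin 2) →ₗ[ℂ] E N where
  toFun a := WithLp.toLp 2 fun (s : Fin N ⊕ Fin N) =>
    match s with
    | Sum.inl j => if (j : ℕ) = 0 then a 0 else 0
    | Sum.inr j => if (j : ℕ) = 0 then a 1 else 0
  map_add' u v := by
    ext i
    rcases i with j | j <;> simp only [PiLp.add_apply] <;> split <;> simp
  map_smul' c v := by
    ext i
    rcases i with j | j <;> simp only [PiLp.smul_apply, RingHom.id_apply, smul_eq_mul] <;>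
      split <;> simp

lemma iota_apply_inl (N : ℕ) (a : EuclideanSpace ℂ (Fin 2)) (j : Fin N) :
    iota N a (Sum.inl j) = if (j : ℕ) = 0 then a 0 else 0 := rfl

lemma iota_apply_inr (N : ℕ) (a : EuclideanSpace ℂ (Fin 2)) (j : Fin N) :
    iota N a (Sum.inr j) = if (j : ℕ) = 0 then a 1 else 0 := rfl

def shiftUp (N : ℕ) (w : E N) : E N := WithLp.toLp 2 fun (s : Fin N ⊕ Fin N) =>
  match s with
  | Sum.inl j => if 1 ≤ (j : ℕ) then w (Sum.inl ⟨(j : ℕ) - 1, by have := j.isLt; omega⟩) else 0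
  | Sum.inr j => if 1 ≤ (j : ℕ) then w (Sum.inr ⟨(j : ℕ) - 1, by have := j.isLt; omega⟩) else 0

lemma shiftUp_apply_inl (N : ℕ) (w : E N) (j : Fin N) :
    shiftUp N w (Sum.inl j) =
      if 1 ≤ (j : ℕ) then w (Sum.inl ⟨(j : ℕ) - 1, by have := j.isLt; omega⟩) else 0 := rfl

lemma shiftUp_apply_inr (N : ℕ) (w : E N) (j : Fin N) :
    shiftUp N w (Sum.inr j) =
      if 1 ≤ (j : ℕ) then w (Sum.inr ⟨(j : ℕ) - 1, by have := j.isLt; omega⟩) else 0 := rfl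

lemma ker_zmap (N : ℕ) (hN : 0 < N) : LinearMap.ker (zmap N) = LinearMap.range (iota N) := by
  apply le_antisymm
  · intro v hv
    rw [LinearMap.mem_ker] at hv
    refine ⟨WithLp.toLp 2 (fun i : Fin 2 => if i = 0 then v (Sum.inl ⟨0, hN⟩) else v (Sum.inr ⟨0, hN⟩)), ?_⟩
    ext s
    rcases s with j | j
    · rw [iota_apply_inl]
      by_cases hj : (j : ℕ) = 0
      · rw [if_pos hj, WithLp.ofLp_toLp, if_pos rfl]
        exact congrArg (WithLp.ofLp _) (congrArg Sum.inl (Fin.ext hj.symm))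
      · rw [if_neg hj]
        have h3 : ((j : ℕ) - 1) + 1 < N := by have := j.isLt; omega
        have h2 := congrFun (congrArg WithLp.ofLp hv) (Sum.inl ⟨(j : ℕ) - 1, by omega⟩)
        rw [zmap_apply_inl, dif_pos h3] at h2
        simp only [PiLp.zero_apply] at h2
        rw [show ((⟨(j : ℕ) - 1 + 1, h3⟩ : Fin N)) = j from Fin.ext (by simp; omega)] at h2
        exact h2.symm
    · rw [iota_apply_inr]
      by_cases hj : (j : ℕ) = 0
      · rw [if_pos hj, WithLp.ofLp_toLp, if_neg (by decide : ¬(1 : Fin 2) = 0)]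
        exact congrArg (WithLp.ofLp _) (congrArg Sum.inr (Fin.ext hj.symm))
      · rw [if_neg hj]
        have h3 : ((j : ℕ) - 1) + 1 < N := by have := j.isLt; omega
        have h2 := congrFun (congrArg WithLp.ofLp hv) (Sum.inr ⟨(j : ℕ) - 1, by omega⟩)
        rw [zmap_apply_inr, dif_pos h3] at h2
        simp only [PiLp.zero_apply] at h2
        rw [show ((⟨(j : ℕ) - 1 + 1, h3⟩ : Fin N)) = j from Fin.ext (by simp; omega)] at h2
        exact h2.symm
  · rintro _ ⟨a, rfl⟩
    rw [LinearMap.mem_ker]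
    ext s
    rcases s with j | j
    · rw [zmap_apply_inl]
      simp only [PiLp.zero_apply]
      split
      · rw [iota_apply_inl, if_neg (by simp)]
      · rfl
    · rw [zmap_apply_inr]
      simp only [PiLp.zero_apply]
      split
      · rw [iota_apply_inr, if_neg (by simp)]
      · rfl

lemma iota_injective (N : ℕ) (hN : 0 < N) : Function.Injective (iota N) := by
  rw [← LinearMap.ker_eq_bot, eq_bot_iff]
  intro a ha
  rw [LinearMap.mem_ker] at ha
  have h0 : a 0 = 0 := by
    have := congrFun (congrArg WithLp.ofLp ha) (Sum.inl ⟨0, hN⟩)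
    rw [iota_apply_inl] at this
    simpa using this
  have h1 : a 1 = 0 := by
    have := congrFun (congrArg WithLp.ofLp ha) (Sum.inr ⟨0, hN⟩)
    rw [iota_apply_inr] at this
    simpa using this
  rw [Submodule.mem_bot]
  ext i
  fin_cases i
  · exact h0
  · exact h1

lemma finrank_ker_zmap (N : ℕ) (hN : 0 < N) :
    Module.finrank ℂ (LinearMap.ker (zmap N)) = 2 := by
  rw [ker_zmap N hN, LinearMap.finrank_range_of_inj (iota_injective N hN)]
  simp

lemma mem_range_zmap (N : ℕ) (hN : 0 < N) (w : E N) :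
    w ∈ LinearMap.range (zmap N) ↔
      w (Sum.inl ⟨N - 1, by omega⟩) = 0 ∧ w (Sum.inr ⟨N - 1, by omega⟩) = 0 := by
  constructor
  · rintro ⟨v, rfl⟩
    constructor
    · rw [zmap_apply_inl, dif_neg (by simp; omega)]
    · rw [zmap_apply_inr, dif_neg (by simp; omega)]
  · rintro ⟨ha, hb⟩
    refine ⟨shiftUp N w, ?_⟩
    ext s
    rcases s with j | j
    · rw [zmap_apply_inl]
      by_cases h : (j : ℕ) + 1 < N
      · rw [dif_pos h, shiftUp_apply_inl, if_pos (by simp)]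
        rfl
      · rw [dif_neg h, ← ha]
        exact congrArg (WithLp.ofLp _) (congrArg Sum.inl (Fin.ext (by simp; omega)))
    · rw [zmap_apply_inr]
      by_cases h : (j : ℕ) + 1 < N
      · rw [dif_pos h, shiftUp_apply_inr, if_pos (by simp)]
        rfl
      · rw [dif_neg h, ← hb]
        exact congrArg (WithLp.ofLp _) (congrArg Sum.inr (Fin.ext (by simp; omega)))

lemma finrank_map_add (N : ℕ) (f : E N →ₗ[ℂ] E N) (W : Submodule ℂ (E N)) :
    Module.finrank ℂ (W.map f) + Module.finrank ℂ ((W ⊓ LinearMap.ker f :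
      Submodule ℂ (E N))) = Module.finrank ℂ W := by
  have h := LinearMap.finrank_range_add_finrank_ker (f.domRestrict W)
  rw [LinearMap.range_domRestrict, LinearMap.ker_domRestrict] at h
  have h2 : Submodule.comap W.subtype (LinearMap.ker f) =
      Submodule.comap W.subtype (W ⊓ LinearMap.ker f) := by
    rw [Submodule.comap_inf, Submodule.comap_subtype_self, top_inf_eq]
  rw [h2, LinearEquiv.finrank_eq (Submodule.comapSubtypeEquivOfLe (inf_le_left : W ⊓ LinearMap.ker f ≤ W))] at h
  exact h

lemma finrank_comap (N : ℕ) (hN : 0 < N) (W : Submodule ℂ (E N))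
    (hle : W ≤ LinearMap.range (zmap N)) :
    Module.finrank ℂ (W.comap (zmap N)) = Module.finrank ℂ W + 2 := by
  have h := finrank_map_add N (zmap N) (W.comap (zmap N))
  rw [Submodule.map_comap_eq_of_le hle] at h
  have h2 : (W.comap (zmap N)) ⊓ LinearMap.ker (zmap N) = LinearMap.ker (zmap N) := by
    rw [inf_eq_right]
    exact LinearMap.ker_le_comap (zmap N)
  rw [h2, finrank_ker_zmap N hN] at h
  omega

lemma li_pow {M : Type*} [AddCommGroup M] [Module ℂ M] (f : M →ₗ[ℂ] M) (x : M) (n : ℕ)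
    (hn0 : 0 < n) (h0 : (f ^ (n - 1)) x ≠ 0) (hn : f ^ n = 0) :
    LinearIndependent ℂ (fun k : Fin n => (f ^ (k : ℕ)) x) := by
  have hpow : ∀ e : ℕ, n ≤ e → (f ^ e) = (0 : M →ₗ[ℂ] M) := by
    intro e he
    rw [← Nat.sub_add_cancel he, pow_add, hn, mul_zero]
  rw [Fintype.linearIndependent_iff]
  intro c hc
  suffices H : ∀ K : ℕ, ∀ k : Fin n, (k : ℕ) = K → c k = 0 by
    intro k; exact H k k rfl
  intro K
  induction K using Nat.strong_induction_on with
  | _ K ih =>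
    intro k hk
    have hKn : K ≤ n - 1 := by have := k.isLt; omega
    have happ : (f ^ (n - 1 - K)) (∑ j : Fin n, c j • (f ^ (j : ℕ)) x) = 0 := by
      rw [hc, map_zero]
    rw [map_sum] at happ
    have hterm : ∀ j : Fin n, (f ^ (n - 1 - K)) (c j • (f ^ (j : ℕ)) x) =
        c j • (f ^ (n - 1 - K + (j : ℕ))) x := by
      intro j
      rw [map_smul, ← Module.End.mul_apply, ← pow_add]
    rw [Finset.sum_congr rfl (fun j _ => hterm j)] at happ
    rw [Finset.sum_eq_single k] at happ
    · have hexp : n - 1 - K + (k : ℕ) = n - 1 := by omega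
      rw [hexp] at happ
      rcases smul_eq_zero.mp happ with h | h
      · exact h
      · exact absurd h h0
    · intro j _ hj
      have hne : (j : ℕ) ≠ K := fun h => hj (Fin.ext (by omega))
      rcases Nat.lt_or_ge (j : ℕ) K with hlt | hge
      · rw [ih (j : ℕ) hlt j rfl, zero_smul]
      · have : n ≤ n - 1 - K + (j : ℕ) := by omega
        rw [hpow _ this]
        simp
    · intro h
      exact absurd (Finset.mem_univ k) h

lemma zmap_stable_le_range (N : ℕ) (hN : 0 < N) (W : Submodule ℂ (E N))
    (hst : W.map (zmap N) ≤ W) (hdim : Module.finrank ℂ W < N) :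
    W ≤ LinearMap.range (zmap N) := by
  by_contra h
  obtain ⟨w, hwW, hwr⟩ := SetLike.not_le_iff_exists.mp h
  have hw0 : (zmap N ^ (N - 1)) w ≠ 0 := by
    intro hz
    apply hwr
    rw [mem_range_zmap N hN]
    constructor
    · have h1 : ((zmap N ^ (N - 1)) w) (Sum.inl ⟨0, hN⟩) = 0 := by rw [hz]; rfl
      rw [zmap_pow_apply_inl, dif_pos (by omega : 0 + (N - 1) < N)] at h1
      rw [← h1]
      exact congrArg (WithLp.ofLp _) (congrArg Sum.inl (Fin.ext (by simp)))
    · have h1 : ((zmap N ^ (N - 1)) w) (Sum.inr ⟨0, hN⟩) = 0 := by rw [hz]; rfl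
      rw [zmap_pow_apply_inr, dif_pos (by omega : 0 + (N - 1) < N)] at h1
      rw [← h1]
      exact congrArg (WithLp.ofLp _) (congrArg Sum.inr (Fin.ext (by simp)))
  have hmem : ∀ k : ℕ, (zmap N ^ k) w ∈ W := by
    intro k
    induction k with
    | zero => simpa using hwW
    | succ k ih =>
      rw [pow_succ', Module.End.mul_apply]
      exact hst (Submodule.mem_map_of_mem ih)
  have hli : LinearIndependent ℂ (fun k : Fin N => (⟨(zmap N ^ (k : ℕ)) w, hmem k⟩ : W)) := by
    apply LinearIndependent.of_comp W.subtype
    exact li_pow (zmap N) w N hN hw0 (zmap_pow_N N)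
  have := hli.fintype_card_le_finrank
  simp at this
  omega

lemma zmap_lt_comap (N : ℕ) (W : Submodule ℂ (E N)) (hst : W.map (zmap N) ≤ W)
    (hW : W ≠ ⊤) : W < W.comap (zmap N) := by
  have hle : W ≤ W.comap (zmap N) := fun x hx => hst (Submodule.mem_map_of_mem hx)
  refine hle.lt_of_ne fun he => hW ?_
  have hk : ∀ k : ℕ, W.comap (zmap N ^ k) = W := by
    intro k
    induction k with
    | zero => rw [pow_zero]; rfl
    | succ k ih =>
      rw [pow_succ, Module.End.mul_eq_comp, Submodule.comap_comp, ih, ← he]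
  have := hk N
  rw [zmap_pow_N N] at this
  rw [← this]
  rw [eq_top_iff]
  intro x _
  show (0 : E N →ₗ[ℂ] E N) x ∈ W
  rw [LinearMap.zero_apply]
  exact W.zero_mem

def buildL (N m i : ℕ) (L' : Fin (m - 2 + 1) → Submodule ℂ (E N)) (v : E N) :
    Fin (m + 1) → Submodule ℂ (E N) := fun j =>
  if (j : ℕ) < i then L' ⟨min (j : ℕ) (m - 2), by omega⟩
  else if (j : ℕ) = i then L' ⟨min (i - 1) (m - 2), by omega⟩ ⊔ ℂ ∙ v
  else (L' ⟨min ((j : ℕ) - 2) (m - 2), by omega⟩).comap (zmap N)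
theorem q_wellDefined_surjective (N m i : ℕ) (hm : 2 ≤ m) (hmN : m ≤ N)
    (h1 : 1 ≤ i) (h2 : i ≤ m - 1) :
    (∀ L ∈ Xmi N m i, qRaw N m i hm L ∈ Ym N (m - 2)) ∧
    (∀ L' ∈ Ym N (m - 2), ∃ L ∈ Xmi N m i, qRaw N m i hm L = L') := by
  have hiN : 0 < N := by omega
  constructor
  · rintro L ⟨⟨hbot, hmono, hdim, hstab⟩, hXeq⟩
    have hX : L ⟨i + 1, by omega⟩ = (L ⟨i - 1, by omega⟩).comap (zmap N) :=
      hXeq (by omega) (by omega)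
    have hdim' : ∀ (a : ℕ) (ha : a < m + 1), Module.finrank ℂ (L ⟨a, ha⟩) = a :=
      fun a ha => hdim ⟨a, ha⟩
    have hker : LinearMap.ker (zmap N) ≤ L ⟨i + 1, by omega⟩ := by
      rw [hX]; exact LinearMap.ker_le_comap (zmap N)
    have hkerle : ∀ (a : ℕ) (ha : a < m + 1), i + 1 ≤ a →
        LinearMap.ker (zmap N) ≤ L ⟨a, ha⟩ := by
      intro a ha h
      exact le_trans hker (hmono.monotone (Fin.mk_le_mk.mpr h))
    have hdimmap : ∀ (a : ℕ) (ha : a < m + 1), i + 1 ≤ a →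
        Module.finrank ℂ ((L ⟨a, ha⟩).map (zmap N)) = a - 2 := by
      intro a ha hia
      have h := finrank_map_add N (zmap N) (L ⟨a, ha⟩)
      rw [inf_eq_right.mpr (hkerle a ha hia), finrank_ker_zmap N hiN, hdim' a ha] at h
      omega
    have hkey : (L ⟨i + 1, by omega⟩).map (zmap N) = L ⟨i - 1, by omega⟩ := by
      apply Submodule.eq_of_le_of_finrank_le
      · rw [hX]; exact Submodule.map_comap_le _ _
      · rw [hdimmap (i + 1) (by omega) le_rfl, hdim' (i - 1) (by omega)]
        omega
    have hqdim : ∀ j : Fin (m - 2 + 1),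
        Module.finrank ℂ (qRaw N m i hm L j) = (j : ℕ) := by
      intro j
      unfold qRaw
      by_cases hj : (j : ℕ) < i
      · rw [if_pos hj]
        exact hdim' (j : ℕ) _
      · rw [if_neg hj, hdimmap ((j : ℕ) + 2) (by have := j.isLt; omega) (by omega)]
        omega
    have hqle : ∀ a b : Fin (m - 2 + 1), a ≤ b → qRaw N m i hm L a ≤ qRaw N m i hm L b := by
      intro a b hab
      have hab' : (a : ℕ) ≤ (b : ℕ) := hab
      unfold qRaw
      split
      · split
        · exact hmono.monotone (Fin.mk_le_mk.mpr hab')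
        · rename_i ha hb
          calc L ⟨(a : ℕ), _⟩ ≤ L ⟨i - 1, by omega⟩ :=
                hmono.monotone (Fin.mk_le_mk.mpr (by omega))
            _ = (L ⟨i + 1, by omega⟩).map (zmap N) := hkey.symm
            _ ≤ (L ⟨(b : ℕ) + 2, by have := b.isLt; omega⟩).map (zmap N) :=
                Submodule.map_mono (hmono.monotone (Fin.mk_le_mk.mpr (by omega)))
      · split
        · rename_i ha hb
          exact (ha (lt_of_le_of_lt hab' hb)).elim
        · exact Submodule.map_mono (hmono.monotone (Fin.mk_le_mk.mpr (by omega)))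
    refine ⟨?_, ?_, hqdim, ?_⟩
    · have h0 := hqdim 0
      rw [Fin.val_zero] at h0
      exact Submodule.finrank_eq_zero.mp h0
    · intro a b hab
      refine lt_of_le_of_ne (hqle a b hab.le) fun he => ?_
      have hv : (a : ℕ) = (b : ℕ) := by
        rw [← hqdim a, ← hqdim b, he]
      exact absurd (Fin.ext hv) hab.ne
    · intro j
      unfold qRaw
      by_cases hj : (j : ℕ) < i
      · rw [if_pos hj]
        exact hstab ⟨(j : ℕ), by have := j.isLt; omega⟩
      · rw [if_neg hj]
        exact Submodule.map_mono (hstab ⟨(j : ℕ) + 2, by have := j.isLt; omega⟩)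
  · rintro L' ⟨hbot', hmono', hdim', hstab'⟩
    have hdN : ∀ (a : ℕ) (ha : a < m - 2 + 1), Module.finrank ℂ (L' ⟨a, ha⟩) = a :=
      fun a ha => hdim' ⟨a, ha⟩
    have hrange : ∀ j : Fin (m - 2 + 1), L' j ≤ LinearMap.range (zmap N) := by
      intro j
      apply zmap_stable_le_range N hiN _ (hstab' j)
      rw [hdim' j]
      have := j.isLt; omega
    have hlecomap : ∀ j : Fin (m - 2 + 1), L' j ≤ (L' j).comap (zmap N) :=
      fun j x hx => hstab' j (Submodule.mem_map_of_mem hx)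
    set W : Submodule ℂ (E N) := L' ⟨i - 1, by omega⟩ with hWdef
    have hWst : W.map (zmap N) ≤ W := hstab' _
    have hWfin : Module.finrank ℂ W = i - 1 := hdN (i - 1) (by omega)
    have hWtop : W ≠ ⊤ := by
      intro h
      rw [h, finrank_top] at hWfin
      simp only [finrank_euclideanSpace, Fintype.card_sum, Fintype.card_fin] at hWfin
      omega
    obtain ⟨v, hv1, hv2⟩ := SetLike.exists_of_lt (zmap_lt_comap N W hWst hWtop)
    have hvz : zmap N v ∈ W := hv1
    have hv0 : v ≠ 0 := fun h => hv2 (h ▸ W.zero_mem)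
    set LL : Fin (m + 1) → Submodule ℂ (E N) := buildL N m i L' v with hLL
    have hLlt : ∀ a : Fin (m + 1), ∀ _ha : (a : ℕ) < i, LL a = L' ⟨(a : ℕ), by omega⟩ := by
      intro a ha
      rw [hLL]
      unfold buildL
      rw [if_pos ha]
      congr 1
      exact Fin.ext (by simp; omega)
    have hLmid : ∀ a : Fin (m + 1), (a : ℕ) = i → LL a = W ⊔ ℂ ∙ v := by
      intro a ha
      rw [hLL]
      unfold buildL
      rw [if_neg (by omega), if_pos ha]
      congr 2
      exact Fin.ext (by simp; omega)
    have hLgt : ∀ a : Fin (m + 1), i < (a : ℕ) →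
        LL a = (L' ⟨(a : ℕ) - 2, by have := a.isLt; omega⟩).comap (zmap N) := by
      intro a ha
      rw [hLL]
      unfold buildL
      rw [if_neg (by omega), if_neg (by omega)]
      congr 2
      exact Fin.ext (by have := a.isLt; simp; omega)
    have hdimL : ∀ a : Fin (m + 1), Module.finrank ℂ (LL a) = (a : ℕ) := by
      intro a
      rcases lt_trichotomy (a : ℕ) i with h | h | h
      · rw [hLlt a h]
        exact hdN _ _
      · rw [hLmid a h]
        have hWv : W ⊓ (ℂ ∙ v) = ⊥ := by
          rw [eq_bot_iff]
          intro x hx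
          rw [Submodule.mem_inf] at hx
          obtain ⟨hxW, hxv⟩ := hx
          rw [Submodule.mem_span_singleton] at hxv
          obtain ⟨c, rfl⟩ := hxv
          rcases eq_or_ne c 0 with rfl | hc
          · simp
          · have hvW : v ∈ W := by
              have h' := W.smul_mem c⁻¹ hxW
              rwa [smul_smul, inv_mul_cancel₀ hc, one_smul] at h'
            exact (hv2 hvW).elim
        have hs := Submodule.finrank_sup_add_finrank_inf_eq W (ℂ ∙ v)
        rw [hWv, finrank_bot, finrank_span_singleton hv0, hWfin] at hs
        omega
      · rw [hLgt a h, finrank_comap N hiN _ (hrange _), hdN ((a : ℕ) - 2) _]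
        have := a.isLt; omega
    have hmonoLe : ∀ a b : Fin (m + 1), a ≤ b → LL a ≤ LL b := by
      intro a b hab
      have hab' : (a : ℕ) ≤ (b : ℕ) := hab
      rcases lt_trichotomy (b : ℕ) i with hb | hb | hb
      · rw [hLlt a (by omega), hLlt b hb]
        exact hmono'.monotone (Fin.mk_le_mk.mpr hab')
      · rw [hLmid b hb]
        rcases lt_or_eq_of_le hab' with ha | ha
        · rw [hLlt a (by omega)]
          exact le_trans (hmono'.monotone (Fin.mk_le_mk.mpr (by omega)) :
            L' ⟨(a : ℕ), by omega⟩ ≤ W) le_sup_left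
        · rw [hLmid a (by omega)]
      · rcases lt_trichotomy (a : ℕ) i with ha | ha | ha
        · rw [hLlt a ha, hLgt b hb]
          exact le_trans (hmono'.monotone (Fin.mk_le_mk.mpr (by have := b.isLt; omega)) :
            L' ⟨(a : ℕ), by omega⟩ ≤ L' ⟨(b : ℕ) - 2, by have := b.isLt; omega⟩)
            (hlecomap _)
        · rw [hLmid a ha, hLgt b hb]
          apply sup_le
          · exact le_trans (hmono'.monotone (Fin.mk_le_mk.mpr (by have := b.isLt; omega)) :
              W ≤ L' ⟨(b : ℕ) - 2, by have := b.isLt; omega⟩) (hlecomap _)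
          · rw [Submodule.span_singleton_le_iff_mem]
            exact Submodule.comap_mono (hmono'.monotone (Fin.mk_le_mk.mpr
              (by have := b.isLt; omega)) : W ≤ L' ⟨(b : ℕ) - 2, _⟩) hv1
        · rw [hLgt a ha, hLgt b hb]
          exact Submodule.comap_mono (hmono'.monotone (Fin.mk_le_mk.mpr (by omega)))
    refine ⟨LL, ⟨⟨?_, ?_, hdimL, ?_⟩, ?_⟩, ?_⟩
    · have h0 := hdimL 0
      rw [Fin.val_zero] at h0
      exact Submodule.finrank_eq_zero.mp h0
    · intro a b hab
      refine lt_of_le_of_ne (hmonoLe a b hab.le) fun he => ?_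
      have hv : (a : ℕ) = (b : ℕ) := by
        rw [← hdimL a, ← hdimL b, he]
      exact absurd (Fin.ext hv) hab.ne
    · intro j
      rcases lt_trichotomy (j : ℕ) i with h | h | h
      · rw [hLlt j h]
        exact hstab' _
      · rw [hLmid j h, Submodule.map_sup]
        apply sup_le
        · exact le_trans hWst le_sup_left
        · rw [Submodule.map_span, Set.image_singleton]
          exact le_trans ((Submodule.span_singleton_le_iff_mem _ _).mpr hvz) le_sup_left
      · rw [hLgt j h]
        exact le_trans (Submodule.map_comap_le _ _) (hlecomap _)
    · intro hA hB
      rw [hLgt ⟨i + 1, hA⟩ (by simp), hLlt ⟨i - 1, hB⟩ (by simp; omega)]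
      congr 2
    · funext j
      unfold qRaw
      split
      · rename_i hj
        rw [hLlt ⟨(j : ℕ), by have := j.isLt; omega⟩ (by simpa using hj)]
      · rename_i hj
        rw [hLgt ⟨(j : ℕ) + 2, by have := j.isLt; omega⟩ (by simp; omega)]
        rw [show (⟨(⟨(j : ℕ) + 2, by have := j.isLt; omega⟩ : Fin (m + 1)) - 2, by
          have := j.isLt; omega⟩ : Fin (m - 2 + 1)) = j from Fin.ext (by simp)]
        exact Submodule.map_comap_eq_of_le (hrange j)
end
end

section
/- Let ψ_{m,i} : X_{m,i} → A_{m,i} be the restriction of φ_m to X_{m,i}. Then g_{m,i} ∘ ψ_{m,i} = φ_{m−2} ∘ q_{m,i} as maps from X_{m,i} to (ℙ¹)^{m−2}. -/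
open scoped ComplexInnerProductSpace

noncomputable section

namespace GPhiAux

open Submodule Module Finset

variable {N : ℕ}

/-- `inl`-component of `v` at natural index, 0 out of range. -/
def vl (v : E N) (n : ℕ) : ℂ := if h : n < N then v (Sum.inl ⟨n, h⟩) else 0

def vr (v : E N) (n : ℕ) : ℂ := if h : n < N then v (Sum.inr ⟨n, h⟩) else 0

lemma vl_coe (v : E N) (j : Fin N) : vl v (j : ℕ) = v (Sum.inl j) := by
  simp [vl, j.isLt]

lemma vr_coe (v : E N) (j : Fin N) : vr v (j : ℕ) = v (Sum.inr j) := by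
  simp [vr, j.isLt]

lemma zmap_inl (v : E N) (j : Fin N) : zmap N v (Sum.inl j) = vl v ((j : ℕ) + 1) := by
  show (if h : (j:ℕ)+1 < N then v (Sum.inl ⟨(j:ℕ)+1, h⟩) else 0) = _
  unfold vl
  split <;> rfl

lemma zmap_inr (v : E N) (j : Fin N) : zmap N v (Sum.inr j) = vr v ((j : ℕ) + 1) := by
  show (if h : (j:ℕ)+1 < N then v (Sum.inr ⟨(j:ℕ)+1, h⟩) else 0) = _
  unfold vr
  split <;> rfl

lemma sum_shift (f : ℕ → ℂ) (hf : f N = 0) :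
    ∑ j : Fin N, f ((j : ℕ) + 1) = ∑ j : Fin N, f (j : ℕ) - f 0 := by
  rw [Fin.sum_univ_eq_sum_range (fun n => f (n + 1)), Fin.sum_univ_eq_sum_range f]
  have h1 : ∑ n ∈ Finset.range (N + 1), f n = (∑ n ∈ Finset.range N, f (n + 1)) + f 0 :=
    Finset.sum_range_succ' f N
  have h2 : ∑ n ∈ Finset.range (N + 1), f n = (∑ n ∈ Finset.range N, f n) + f N :=
    Finset.sum_range_succ f N
  rw [hf, add_zero] at h2
  rw [h2] at h1
  rw [h1]; ring

end GPhiAux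
namespace GPhiAux
open Submodule Module Finset
variable {N : ℕ}

lemma inner_expand (u v : E N) :
    ⟪u, v⟫ = ∑ j : Fin N, (starRingEnd ℂ) (vl u j) * vl v j
      + ∑ j : Fin N, (starRingEnd ℂ) (vr u j) * vr v j := by
  have : ⟪u, v⟫ = ∑ i : Fin N ⊕ Fin N, (starRingEnd ℂ) (u i) * (v i) := by
    simp [PiLp.inner_apply, RCLike.inner_apply, mul_comm]
  rw [this, Fintype.sum_sum_type]
  simp [vl_coe, vr_coe]

lemma inner_zmap_zmap (u v : E N) :
    ⟪zmap N u, zmap N v⟫ = ⟪u, v⟫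
      - (starRingEnd ℂ) (vl u 0) * vl v 0 - (starRingEnd ℂ) (vr u 0) * vr v 0 := by
  rw [inner_expand, inner_expand]
  have Al := sum_shift (N := N) (fun n => (starRingEnd ℂ) (vl u n) * vl v n) (by simp [vl])
  have Ar := sum_shift (N := N) (fun n => (starRingEnd ℂ) (vr u n) * vr v n) (by simp [vr])
  have Bl : ∑ j : Fin N, (starRingEnd ℂ) (vl (zmap N u) j) * vl (zmap N v) j
      = ∑ j : Fin N, (starRingEnd ℂ) (vl u ((j:ℕ)+1)) * vl v ((j:ℕ)+1) :=
    Finset.sum_congr rfl fun j _ => by rw [vl_coe, vl_coe, zmap_inl, zmap_inl]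
  have Br : ∑ j : Fin N, (starRingEnd ℂ) (vr (zmap N u) j) * vr (zmap N v) j
      = ∑ j : Fin N, (starRingEnd ℂ) (vr u ((j:ℕ)+1)) * vr v ((j:ℕ)+1) :=
    Finset.sum_congr rfl fun j _ => by rw [vr_coe, vr_coe, zmap_inr, zmap_inr]
  rw [Bl, Br, Al, Ar]
  ring

/-- the adjoint of `zmap`, as a bare function. -/
def zstar (w : E N) : E N := WithLp.toLp 2 fun i =>
  match i with
  | Sum.inl j => if (j : ℕ) = 0 then 0 else vl w ((j : ℕ) - 1)
  | Sum.inr j => if (j : ℕ) = 0 then 0 else vr w ((j : ℕ) - 1)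

lemma zstar_inl (w : E N) (j : Fin N) :
    zstar w (Sum.inl j) = if (j : ℕ) = 0 then 0 else vl w ((j : ℕ) - 1) := rfl

lemma zstar_inr (w : E N) (j : Fin N) :
    zstar w (Sum.inr j) = if (j : ℕ) = 0 then 0 else vr w ((j : ℕ) - 1) := rfl

lemma inner_zstar (w u : E N) : ⟪zstar w, u⟫ = ⟪w, zmap N u⟫ := by
  rw [inner_expand, inner_expand]
  have Al := sum_shift (N := N) (fun n => if n = 0 then 0 else (starRingEnd ℂ) (vl w (n-1)) * vl u n)
    (by by_cases h : N = 0 <;> simp [h, vl])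
  have Ar := sum_shift (N := N) (fun n => if n = 0 then 0 else (starRingEnd ℂ) (vr w (n-1)) * vr u n)
    (by by_cases h : N = 0 <;> simp [h, vr])
  have Bl : ∑ j : Fin N, (starRingEnd ℂ) (vl w j) * vl (zmap N u) j
      = ∑ j : Fin N, (if (j:ℕ)+1 = 0 then 0 else (starRingEnd ℂ) (vl w ((j:ℕ)+1-1)) * vl u ((j:ℕ)+1)) :=
    Finset.sum_congr rfl fun j _ => by
      rw [vl_coe w, vl_coe (zmap N u), zmap_inl, ← vl_coe w]; simp
  have Br : ∑ j : Fin N, (starRingEnd ℂ) (vr w j) * vr (zmap N u) j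
      = ∑ j : Fin N, (if (j:ℕ)+1 = 0 then 0 else (starRingEnd ℂ) (vr w ((j:ℕ)+1-1)) * vr u ((j:ℕ)+1)) :=
    Finset.sum_congr rfl fun j _ => by
      rw [vr_coe w, vr_coe (zmap N u), zmap_inr, ← vr_coe w]; simp
  have Cl : ∑ j : Fin N, (starRingEnd ℂ) (vl (zstar w) j) * vl u j
      = ∑ j : Fin N, (if (j:ℕ) = 0 then 0 else (starRingEnd ℂ) (vl w ((j:ℕ)-1)) * vl u (j:ℕ)) :=
    Finset.sum_congr rfl fun j _ => by
      rw [vl_coe (zstar w), zstar_inl]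
      by_cases h : (j:ℕ) = 0 <;> simp [h]
  have Cr : ∑ j : Fin N, (starRingEnd ℂ) (vr (zstar w) j) * vr u j
      = ∑ j : Fin N, (if (j:ℕ) = 0 then 0 else (starRingEnd ℂ) (vr w ((j:ℕ)-1)) * vr u (j:ℕ)) :=
    Finset.sum_congr rfl fun j _ => by
      rw [vr_coe (zstar w), zstar_inr]
      by_cases h : (j:ℕ) = 0 <;> simp [h]
  rw [Bl, Br, Cl, Cr, Al, Ar]
  simp

end GPhiAux
namespace GPhiAux
open Submodule Module Finset
variable {N : ℕ}

lemma Cmap_apply (v : E N) (i : Fin 2) :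
    Cmap N v i = if i = 0 then ∑ j : Fin N, v (Sum.inl j) else ∑ j : Fin N, v (Sum.inr j) := rfl

lemma Cmap_zmap (v : E N) (h0l : vl v 0 = 0) (h0r : vr v 0 = 0) :
    Cmap N (zmap N v) = Cmap N v := by
  have Al := sum_shift (N := N) (fun n => vl v n) (by simp [vl])
  have Ar := sum_shift (N := N) (fun n => vr v n) (by simp [vr])
  ext i
  rw [Cmap_apply, Cmap_apply]
  split
  · calc ∑ j : Fin N, zmap N v (Sum.inl j)
        = ∑ j : Fin N, vl v ((j : ℕ) + 1) := Finset.sum_congr rfl fun j _ => zmap_inl v j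
      _ = ∑ j : Fin N, vl v (j : ℕ) - vl v 0 := Al
      _ = ∑ j : Fin N, v (Sum.inl j) := by
          rw [h0l, sub_zero]; exact Finset.sum_congr rfl fun j _ => vl_coe v j
  · calc ∑ j : Fin N, zmap N v (Sum.inr j)
        = ∑ j : Fin N, vr v ((j : ℕ) + 1) := Finset.sum_congr rfl fun j _ => zmap_inr v j
      _ = ∑ j : Fin N, vr v (j : ℕ) - vr v 0 := Ar
      _ = ∑ j : Fin N, v (Sum.inr j) := by
          rw [h0r, sub_zero]; exact Finset.sum_congr rfl fun j _ => vr_coe v j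

def s1 (hN : 0 < N) : E N := EuclideanSpace.single (Sum.inl ⟨0, hN⟩) 1
def s2 (hN : 0 < N) : E N := EuclideanSpace.single (Sum.inr ⟨0, hN⟩) 1

lemma zmap_s1 (hN : 0 < N) : zmap N (s1 hN) = 0 := by
  ext i
  rcases i with j | j
  · rw [zmap_inl]
    simp [vl, s1, EuclideanSpace.single_apply]
  · rw [zmap_inr]
    simp [vr, s1, EuclideanSpace.single_apply]

lemma zmap_s2 (hN : 0 < N) : zmap N (s2 hN) = 0 := by
  ext i
  rcases i with j | j
  · rw [zmap_inl]
    simp [vl, s2, EuclideanSpace.single_apply]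
  · rw [zmap_inr]
    simp [vr, s2, EuclideanSpace.single_apply]

lemma inner_s1_left (hN : 0 < N) (u : E N) : ⟪s1 hN, u⟫ = vl u 0 := by
  rw [s1, EuclideanSpace.inner_single_left]
  simp [vl, hN]

lemma inner_s2_left (hN : 0 < N) (u : E N) : ⟪s2 hN, u⟫ = vr u 0 := by
  rw [s2, EuclideanSpace.inner_single_left]
  simp [vr, hN]

lemma inner_s1_right (hN : 0 < N) (u : E N) : ⟪u, s1 hN⟫ = (starRingEnd ℂ) (vl u 0) := by
  rw [s1, EuclideanSpace.inner_single_right]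
  simp [vl, hN]

lemma inner_s2_right (hN : 0 < N) (u : E N) : ⟪u, s2 hN⟫ = (starRingEnd ℂ) (vr u 0) := by
  rw [s2, EuclideanSpace.inner_single_right]
  simp [vr, hN]

lemma comp_zero_of_orth (hN : 0 < N) {M : Submodule ℂ (E N)} (h1 : s1 hN ∈ M)
    (h2 : s2 hN ∈ M) {u : E N} (hu : u ∈ Mᗮ) : vl u 0 = 0 ∧ vr u 0 = 0 := by
  have h := (Submodule.mem_orthogonal M u).mp hu
  exact ⟨by rw [← inner_s1_left hN]; exact h _ h1, by rw [← inner_s2_left hN]; exact h _ h2⟩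

/-- Key lemma 1 : `z(L ∩ M^⊥) = (zL) ∩ (zM)^⊥` when `ker z ∋ s1,s2 ∈ M ≤ L`. -/
lemma map_z_inf_orth (hN : 0 < N) {M L : Submodule ℂ (E N)} (hML : M ≤ L)
    (h1 : s1 hN ∈ M) (h2 : s2 hN ∈ M) :
    (L.map (zmap N)) ⊓ (M.map (zmap N))ᗮ = (L ⊓ Mᗮ).map (zmap N) := by
  apply le_antisymm
  · intro x hx
    rw [Submodule.mem_inf] at hx
    obtain ⟨hx1, hx2⟩ := hx
    rw [Submodule.mem_map] at hx1
    obtain ⟨u', hu', rfl⟩ := hx1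
    set k : E N := vl u' 0 • s1 hN + vr u' 0 • s2 hN with hk
    have hkM : k ∈ M := add_mem (smul_mem _ _ h1) (smul_mem _ _ h2)
    have hzk : zmap N k = 0 := by
      rw [hk, map_add, map_smul, map_smul, zmap_s1, zmap_s2]; simp
    rw [Submodule.mem_map]
    refine ⟨u' - k, ?_, by rw [map_sub, hzk, sub_zero]⟩
    rw [Submodule.mem_inf]
    constructor
    · exact sub_mem hu' (hML hkM)
    · rw [Submodule.mem_orthogonal]
      intro m hm
      have hzm : ⟪zmap N m, zmap N u'⟫ = 0 := by
        rw [Submodule.mem_orthogonal] at hx2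
        exact hx2 _ (Submodule.mem_map.mpr ⟨m, hm, rfl⟩)
      rw [inner_zmap_zmap] at hzm
      rw [inner_sub_right, hk, inner_add_right, inner_smul_right, inner_smul_right,
        inner_s1_right hN, inner_s2_right hN]
      linear_combination hzm
  · intro x hx
    rw [Submodule.mem_map] at hx
    obtain ⟨u, hu, rfl⟩ := hx
    rw [Submodule.mem_inf] at hu
    obtain ⟨huL, huM⟩ := hu
    rw [Submodule.mem_inf]
    refine ⟨Submodule.mem_map.mpr ⟨u, huL, rfl⟩, ?_⟩
    rw [Submodule.mem_orthogonal]
    rintro y hy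
    rw [Submodule.mem_map] at hy
    obtain ⟨m, hm, rfl⟩ := hy
    have h0 := comp_zero_of_orth hN h1 h2 huM
    have hmu : ⟪m, u⟫ = 0 := (Submodule.mem_orthogonal M u).mp huM m hm
    rw [inner_zmap_zmap, hmu, h0.1, h0.2]
    ring

end GPhiAux
namespace GPhiAux
open Submodule Module Finset
variable {N : ℕ}

lemma vl_zmap_top (hN : 0 < N) (y : E N) : vl (zmap N y) (N - 1) = 0 := by
  have h : N - 1 < N := by omega
  have := zmap_inl y ⟨N - 1, h⟩
  simp only [vl, h, dif_pos] at *
  rw [this]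
  simp [vl, show ¬ (N - 1 + 1 < N) by omega]

lemma vr_zmap_top (hN : 0 < N) (y : E N) : vr (zmap N y) (N - 1) = 0 := by
  have h : N - 1 < N := by omega
  have := zmap_inr y ⟨N - 1, h⟩
  simp only [vr, h, dif_pos] at *
  rw [this]
  simp [vr, show ¬ (N - 1 + 1 < N) by omega]

lemma zmap_zstar (hN : 0 < N) (w : E N) (hl : vl w (N - 1) = 0) (hr : vr w (N - 1) = 0) :
    zmap N (zstar w) = w := by
  ext i
  rcases i with j | j
  · rw [zmap_inl]
    by_cases h : (j : ℕ) + 1 < N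
    · have : vl (zstar w) ((j : ℕ) + 1) = zstar w (Sum.inl ⟨(j : ℕ) + 1, h⟩) := by
        simp [vl, h]
      rw [this, zstar_inl]
      simp [vl_coe]
    · have hj : (j : ℕ) = N - 1 := by have := j.isLt; omega
      have : vl (zstar w) ((j : ℕ) + 1) = 0 := by simp [vl, h]
      rw [this, ← vl_coe w j, hj, hl]
  · rw [zmap_inr]
    by_cases h : (j : ℕ) + 1 < N
    · have : vr (zstar w) ((j : ℕ) + 1) = zstar w (Sum.inr ⟨(j : ℕ) + 1, h⟩) := by
        simp [vr, h]
      rw [this, zstar_inr]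
      simp [vr_coe]
    · have hj : (j : ℕ) = N - 1 := by have := j.isLt; omega
      have : vr (zstar w) ((j : ℕ) + 1) = 0 := by simp [vr, h]
      rw [this, ← vr_coe w j, hj, hr]

/-- Key lemma 2 : `z(L'' ∩ (z⁻¹M')^⊥) = (zL'') ∩ M'^⊥` when `M' ≤ range z` and `z⁻¹M' ≤ L''`. -/
lemma b1 (hN : 0 < N) {M' L'' : Submodule ℂ (E N)}
    (hrange : M' ≤ LinearMap.range (zmap N))
    (hsub : M'.comap (zmap N) ≤ L'') :
    (L''.map (zmap N)) ⊓ M'ᗮ = (L'' ⊓ (M'.comap (zmap N))ᗮ).map (zmap N) := by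
  have fwd : ∀ u, u ∈ (M'.comap (zmap N))ᗮ → zmap N u ∈ M'ᗮ := by
    intro u hu
    rw [Submodule.mem_orthogonal]
    intro w hw
    obtain ⟨y, rfl⟩ := hrange hw
    have hzs : zmap N (zstar (zmap N y)) = zmap N y :=
      zmap_zstar hN _ (vl_zmap_top hN y) (vr_zmap_top hN y)
    have hmem : zstar (zmap N y) ∈ M'.comap (zmap N) := by
      rw [Submodule.mem_comap, hzs]; exact hw
    have := (Submodule.mem_orthogonal _ u).mp hu _ hmem
    rwa [inner_zstar] at this
  apply le_antisymm
  · intro x hx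
    rw [Submodule.mem_inf] at hx
    obtain ⟨hx1, hx2⟩ := hx
    rw [Submodule.mem_map] at hx1
    obtain ⟨u', hu', rfl⟩ := hx1
    obtain ⟨v, hvL', w, hw, rfl⟩ :=
      Submodule.exists_add_mem_mem_orthogonal (K := M'.comap (zmap N)) u'
    have hwL : w ∈ L'' := by
      have h := sub_mem hu' (hsub hvL')
      simpa using h
    have hzw : zmap N w ∈ M'ᗮ := fwd w hw
    have hzv : zmap N v ∈ M' := Submodule.mem_comap.mp hvL'
    have hzvperp : zmap N v ∈ M'ᗮ := by
      have : zmap N (v + w) - zmap N w ∈ M'ᗮ := sub_mem hx2 hzw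
      rwa [map_add, add_sub_cancel_right] at this
    have hzv0 : zmap N v = 0 := by
      have h0 := (Submodule.mem_orthogonal M' _).mp hzvperp _ hzv
      exact inner_self_eq_zero.mp h0
    rw [Submodule.mem_map]
    exact ⟨w, Submodule.mem_inf.mpr ⟨hwL, hw⟩, by rw [map_add, hzv0, zero_add]⟩
  · intro x hx
    rw [Submodule.mem_map] at hx
    obtain ⟨u, hu, rfl⟩ := hx
    rw [Submodule.mem_inf] at hu
    exact Submodule.mem_inf.mpr ⟨Submodule.mem_map.mpr ⟨u, hu.1, rfl⟩, fwd u hu.2⟩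

lemma map_C_map_z (S : Submodule ℂ (E N)) (hS : ∀ u ∈ S, vl u 0 = 0 ∧ vr u 0 = 0) :
    (S.map (zmap N)).map (Cmap N) = S.map (Cmap N) := by
  ext x
  simp only [Submodule.mem_map]
  constructor
  · rintro ⟨y, ⟨u, hu, rfl⟩, rfl⟩
    exact ⟨u, hu, (Cmap_zmap u (hS u hu).1 (hS u hu).2).symm⟩
  · rintro ⟨u, hu, rfl⟩
    exact ⟨zmap N u, ⟨u, hu, rfl⟩, Cmap_zmap u (hS u hu).1 (hS u hu).2⟩

end GPhiAux
namespace GPhiAux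
open Submodule Module Finset
variable {N : ℕ}

lemma s1_mem_ker (hN : 0 < N) : s1 hN ∈ LinearMap.ker (zmap N) :=
  LinearMap.mem_ker.mpr (zmap_s1 hN)

lemma s2_mem_ker (hN : 0 < N) : s2 hN ∈ LinearMap.ker (zmap N) :=
  LinearMap.mem_ker.mpr (zmap_s2 hN)

lemma ker_le_span (hN : 0 < N) :
    LinearMap.ker (zmap N) ≤ Submodule.span ℂ {s1 hN, s2 hN} := by
  intro v hv
  rw [LinearMap.mem_ker] at hv
  have hcompl : ∀ k : Fin N, (k : ℕ) ≠ 0 → v (Sum.inl k) = 0 := by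
    intro k hk
    have ht : (k : ℕ) - 1 < N := by have := k.isLt; omega
    have h0 : zmap N v (Sum.inl ⟨(k : ℕ) - 1, ht⟩) = 0 := by rw [hv]; rfl
    rw [zmap_inl] at h0
    simpa [show (k : ℕ) - 1 + 1 = (k : ℕ) from by omega, vl_coe] using h0
  have hcompr : ∀ k : Fin N, (k : ℕ) ≠ 0 → v (Sum.inr k) = 0 := by
    intro k hk
    have ht : (k : ℕ) - 1 < N := by have := k.isLt; omega
    have h0 : zmap N v (Sum.inr ⟨(k : ℕ) - 1, ht⟩) = 0 := by rw [hv]; rfl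
    rw [zmap_inr] at h0
    simpa [show (k : ℕ) - 1 + 1 = (k : ℕ) from by omega, vr_coe] using h0
  rw [Submodule.mem_span_pair]
  refine ⟨vl v 0, vr v 0, ?_⟩
  ext idx
  have hadd : ∀ j : Fin N ⊕ Fin N,
      (vl v 0 • s1 hN + vr v 0 • s2 hN) j = vl v 0 * s1 hN j + vr v 0 * s2 hN j := by
    intro j; rfl
  rw [hadd]
  rcases idx with j | j
  · by_cases h : (j : ℕ) = 0
    · have : j = ⟨0, hN⟩ := Fin.ext h
      subst this
      simp [s1, s2, EuclideanSpace.single_apply, vl, hN]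
    · rw [hcompl j h]
      simp [s1, s2, EuclideanSpace.single_apply]
      intro he
      exact absurd (congrArg Fin.val he) h
  · by_cases h : (j : ℕ) = 0
    · have : j = ⟨0, hN⟩ := Fin.ext h
      subst this
      simp [s1, s2, EuclideanSpace.single_apply, vr, hN]
    · rw [hcompr j h]
      simp [s1, s2, EuclideanSpace.single_apply]
      intro he
      exact absurd (congrArg Fin.val he) h

lemma finrank_ker_le (hN : 0 < N) : finrank ℂ (LinearMap.ker (zmap N)) ≤ 2 := by
  have h1 : finrank ℂ (LinearMap.ker (zmap N)) ≤
      finrank ℂ (Submodule.span ℂ {s1 hN, s2 hN}) :=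
    Submodule.finrank_mono (ker_le_span hN)
  refine h1.trans ?_
  classical
  have : ({s1 hN, s2 hN} : Set (E N)).toFinset.card ≤ 2 := by
    rw [Set.toFinset_insert, Set.toFinset_singleton]
    exact (Finset.card_insert_le _ _).trans (by simp)
  exact (finrank_span_le_card _).trans this

lemma le_range_of_finrank (hN : 0 < N) {M' : Submodule ℂ (E N)}
    (hfr : finrank ℂ (M'.comap (zmap N)) = finrank ℂ M' + 2) :
    M' ≤ LinearMap.range (zmap N) := by
  set L' := M'.comap (zmap N) with hL'
  have hker : LinearMap.ker (zmap N) ≤ L' := Submodule.comap_mono bot_le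
  have hrn := LinearMap.finrank_range_add_finrank_ker ((zmap N).domRestrict L')
  rw [LinearMap.range_domRestrict, LinearMap.ker_domRestrict] at hrn
  have he : finrank ℂ (Submodule.comap L'.subtype (LinearMap.ker (zmap N)))
      = finrank ℂ (LinearMap.ker (zmap N)) :=
    (Submodule.comapSubtypeEquivOfLe hker).finrank_eq
  rw [he] at hrn
  have hmc : L'.map (zmap N) = LinearMap.range (zmap N) ⊓ M' := Submodule.map_comap_eq _ _
  rw [hmc, hfr] at hrn
  have hk2 := finrank_ker_le hN
  have hle : finrank ℂ M' ≤ finrank ℂ (LinearMap.range (zmap N) ⊓ M' : Submodule ℂ (E N)) := by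
    omega
  have heq : LinearMap.range (zmap N) ⊓ M' = M' :=
    Submodule.eq_of_le_of_finrank_le inf_le_right hle
  exact inf_eq_right.mp heq

end GPhiAux
namespace GPhiAux
open Submodule Module
variable {N : ℕ}

lemma case_b1 (hN : 0 < N) {M' L' L'' : Submodule ℂ (E N)}
    (hXi : L' = M'.comap (zmap N))
    (hrange : M' ≤ LinearMap.range (zmap N))
    (hsub : L' ≤ L'') :
    Submodule.map (Cmap N) (Submodule.map (zmap N) L'' ⊓ M'ᗮ)
      = Submodule.map (Cmap N) (L'' ⊓ L'ᗮ) := by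
  subst hXi
  rw [b1 hN hrange hsub]
  apply map_C_map_z
  intro u hu
  have hu2 : u ∈ (M'.comap (zmap N))ᗮ := (Submodule.mem_inf.mp hu).2
  have hm1 : s1 hN ∈ M'.comap (zmap N) := by
    rw [Submodule.mem_comap, zmap_s1]; exact zero_mem _
  have hm2 : s2 hN ∈ M'.comap (zmap N) := by
    rw [Submodule.mem_comap, zmap_s2]; exact zero_mem _
  exact comp_zero_of_orth hN hm1 hm2 hu2

lemma case_b2 (hN : 0 < N) {M L : Submodule ℂ (E N)} (hML : M ≤ L)
    (h1 : s1 hN ∈ M) (h2 : s2 hN ∈ M) :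
    Submodule.map (Cmap N) (Submodule.map (zmap N) L ⊓ (Submodule.map (zmap N) M)ᗮ)
      = Submodule.map (Cmap N) (L ⊓ Mᗮ) := by
  rw [map_z_inf_orth hN hML h1 h2]
  apply map_C_map_z
  intro u hu
  exact comp_zero_of_orth hN h1 h2 (Submodule.mem_inf.mp hu).2

end GPhiAux
open GPhiAux
theorem g_phi_eq_phi_q (N m i : ℕ) (hm : 2 ≤ m) (hmN : m ≤ N)
    (h1 : 1 ≤ i) (h2 : i ≤ m - 1) :
    ∀ L ∈ Xmi N m i, gRaw m i (phiRaw N m L) = phiRaw N (m - 2) (qRaw N m i hm L) := by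
  intro L hL
  obtain ⟨⟨hbot, hmono, hrank, hstab⟩, hX⟩ := hL
  have hN : 0 < N := by omega
  have him1 : i + 1 < m + 1 := by omega
  have him2 : i - 1 < m + 1 := by omega
  have hXi : L ⟨i + 1, him1⟩ = (L ⟨i - 1, him2⟩).comap (zmap N) := hX him1 him2
  have hs1 : s1 hN ∈ L ⟨i + 1, him1⟩ := by
    rw [hXi, Submodule.mem_comap, zmap_s1]; exact zero_mem _
  have hs2 : s2 hN ∈ L ⟨i + 1, him1⟩ := by
    rw [hXi, Submodule.mem_comap, zmap_s2]; exact zero_mem _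
  have hrange : L ⟨i - 1, him2⟩ ≤ LinearMap.range (zmap N) := by
    apply le_range_of_finrank hN
    rw [← hXi, hrank ⟨i + 1, him1⟩, hrank ⟨i - 1, him2⟩]
    show i + 1 = i - 1 + 2
    omega
  funext k
  obtain ⟨kv, hk⟩ := k
  simp only [gRaw, phiRaw, qRaw, Fin.succ_mk, Fin.castSucc_mk]
  split_ifs with hc1 hc2 hc3
  · rfl
  · exact absurd hc1 (by omega)
  · -- kv + 1 = i
    have p0 : kv < m + 1 := by omega
    have p2 : kv + 2 < m + 1 := by omega
    have p3 : kv + 3 < m + 1 := by omega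
    have e2 : (⟨kv + 2, p2⟩ : Fin (m + 1)) = ⟨i + 1, him1⟩ := by
      simp only [Fin.mk.injEq]; omega
    have e0 : (⟨kv, p0⟩ : Fin (m + 1)) = ⟨i - 1, him2⟩ := by
      simp only [Fin.mk.injEq]; omega
    have hXi' : L ⟨kv + 2, p2⟩ = (L ⟨kv, p0⟩).comap (zmap N) := by
      rw [e2, e0]; exact hXi
    have hrange' : L ⟨kv, p0⟩ ≤ LinearMap.range (zmap N) := by rw [e0]; exact hrange
    have hsub' : L ⟨kv + 2, p2⟩ ≤ L ⟨kv + 3, p3⟩ :=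
      hmono.monotone (by rw [Fin.mk_le_mk]; omega)
    exact (case_b1 hN hXi' hrange' hsub').symm
  · -- i ≤ kv
    have p2 : kv + 2 < m + 1 := by omega
    have p3 : kv + 3 < m + 1 := by omega
    have hML' : L ⟨kv + 2, p2⟩ ≤ L ⟨kv + 3, p3⟩ :=
      hmono.monotone (by rw [Fin.mk_le_mk]; omega)
    have hle : L ⟨i + 1, him1⟩ ≤ L ⟨kv + 2, p2⟩ :=
      hmono.monotone (by rw [Fin.mk_le_mk]; omega)
    exact (case_b2 hN hML' (hle hs1) (hle hs2)).symm
end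
end

section
/- Suppose (L_1,…,L_{2n}) ∈ Y_{2n} satisfies L_{s_a(j)} = z^{−d_a(j)} L_{j−1} for all j ∈ O_a, where a ∈ B^n is a crossingless matching. Then L_{2n} = E_n = ker(z^n). -/
open scoped ComplexInnerProductSpace

noncomputable section

lemma closed_even (n : ℕ) (a : CrossinglessMatching n) (r : ℕ) (hr : r ≤ 2*n)
    (hc : ∀ p ∈ a.pairs, p.1 ≤ r → p.2 ≤ r) : Even r := by
  classical
  set F := a.pairs.filter (fun p => p.2 ≤ r) with hF
  have key : Finset.Icc 1 r = F.biUnion (fun p => {p.1, p.2}) := by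
    ext k
    simp only [Finset.mem_Icc, Finset.mem_biUnion, Finset.mem_filter, Finset.mem_insert,
      Finset.mem_singleton, hF]
    constructor
    · rintro ⟨hk1, hk2⟩
      obtain ⟨p, ⟨hp, hpk⟩, -⟩ := a.cover k hk1 (hk2.trans hr)
      refine ⟨p, ⟨hp, ?_⟩, by omega⟩
      rcases hpk with h | h
      · exact hc p hp (by omega)
      · omega
    · rintro ⟨p, ⟨hp, hp2⟩, hk⟩
      have := a.lt p hp
      have := (a.mem_range p hp).1
      omega
  have hdisj : (F : Set (ℕ × ℕ)).PairwiseDisjoint (fun p => ({p.1, p.2} : Finset ℕ)) := by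
    intro p hp q hq hpq
    simp only [Finset.coe_filter, Set.mem_setOf_eq, hF] at hp hq
    refine Finset.disjoint_left.2 fun k hkp hkq => hpq ?_
    simp only [Finset.mem_insert, Finset.mem_singleton] at hkp hkq
    have h1p := (a.mem_range p hp.1).1
    have h1q := (a.mem_range q hq.1).1
    have hlp := a.lt p hp.1
    have hlq := a.lt q hq.1
    have hk1 : 1 ≤ k := by omega
    have hk2 : k ≤ 2 * n := by omega
    obtain ⟨u, -, hu⟩ := a.cover k hk1 hk2
    exact (hu p ⟨hp.1, by omega⟩).trans (hu q ⟨hq.1, by omega⟩).symm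
  have hcard : r = 2 * F.card := by
    have h1 : (Finset.Icc 1 r).card = r := by simp
    rw [key, Finset.card_biUnion (fun p hp q hq h => hdisj hp hq h)] at h1
    have h2 : ∀ p ∈ F, ({p.1, p.2} : Finset ℕ).card = 2 := by
      intro p hp
      simp only [hF, Finset.mem_filter] at hp
      have := a.lt p hp.1
      rw [Finset.card_insert_of_notMem (by simp; omega), Finset.card_singleton]
    rw [Finset.sum_congr rfl h2, Finset.sum_const, smul_eq_mul] at h1
    omega
  exact ⟨F.card, by omega⟩

open Fin.NatCast in
lemma ka_closed_eq_ker (N n : ℕ) (a : CrossinglessMatching n)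
    (L : Fin (2 * n + 1) → Submodule ℂ (E N))
    (hL : L ∈ KaSet N (2 * n) a.pairs) :
    ∀ r, r ≤ 2 * n → (∀ p ∈ a.pairs, p.1 ≤ r → p.2 ≤ r) →
      L ((r : ℕ) : Fin (2 * n + 1)) = LinearMap.ker ((zmap N) ^ (r / 2)) := by
  intro r
  induction r using Nat.strong_induction_on with
  | _ r ih =>
    intro hr hc
    rcases Nat.eq_zero_or_pos r with h0 | hpos
    · subst h0
      have hbot : L 0 = ⊥ := hL.1.1
      simp only [Nat.cast_zero, Nat.zero_div, pow_zero, hbot]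
      rw [Module.End.one_eq_id, LinearMap.ker_id]
    · obtain ⟨p, ⟨hp, hpk⟩, huniq⟩ := a.cover r hpos hr
      have hlt := a.lt p hp
      have hrange := a.mem_range p hp
      have hp2 : p.2 = r := by
        rcases hpk with h | h
        · have := hc p hp (le_of_eq h); omega
        · exact h
      set j := p.1 with hj
      have hj1 : 1 ≤ j := hrange.1
      have hjr : j < r := by omega
      have hcj : ∀ q ∈ a.pairs, q.1 ≤ j - 1 → q.2 ≤ j - 1 := by
        intro q hq hq1
        have hltq := a.lt q hq
        have hrangeq := a.mem_range q hq
        by_contra hq2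
        push_neg at hq2
        have hq2r : q.2 ≤ r := hc q hq (by omega)
        have hqj : q.2 ≠ j := by
          intro h
          obtain ⟨u, -, hu⟩ := a.cover j hj1 (by omega)
          have h1 := hu p ⟨hp, Or.inl rfl⟩
          have h2 := hu q ⟨hq, Or.inr h⟩
          have h3 : q = p := h2.trans h1.symm
          have h4 : q.1 = j := by rw [h3, ← hj]
          omega
        have hqr : q.2 ≠ r := by
          intro h
          have h1 := huniq q ⟨hq, Or.inr h⟩
          have h2 := huniq p ⟨hp, hpk⟩
          have h3 : q = p := h1.trans h2.symm
          have h4 : q.1 = j := by rw [h3, ← hj]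
          omega
        have hpr : (j, r) ∈ a.pairs := by
          have : (p.1, p.2) = p := rfl
          rw [← hj, hp2] at this
          rwa [this]
        exact a.noncross q.1 j q.2 r (by omega) (by omega) (by omega)
          (by simpa using hq) hpr
      have her : Even r := closed_even n a r hr hc
      have hej : Even (j - 1) := closed_even n a (j - 1) (by omega) hcj
      have hIH := ih (j - 1) (by omega) (by omega) hcj
      have hcond := hL.2 p hp
      rw [hp2, ← hj] at hcond
      obtain ⟨u, hu⟩ := her
      obtain ⟨v, hv⟩ := hej
      have harith : (j - 1) / 2 + (r - j + 1) / 2 = r / 2 := by omega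
      rw [hcond, hIH, ← LinearMap.ker_comp, ← Module.End.mul_eq_comp, ← pow_add, harith]

theorem Ka_top_eq_En (N n : ℕ) (hn : 1 ≤ n) (hN : 2 * n ≤ N)
    (a : CrossinglessMatching n) (L : Fin (2 * n + 1) → Submodule ℂ (E N))
    (hL : L ∈ KaSet N (2 * n) a.pairs) :
    L (Fin.last (2 * n)) = LinearMap.ker ((zmap N) ^ n) := by
  have h := ka_closed_eq_ker N n a L hL (2 * n) le_rfl
    (fun p hp _ => (a.mem_range p hp).2)
  rw [Fin.natCast_eq_last] at h
  have h2 : 2 * n / 2 = n := by omega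
  rw [h2] at h
  exact h
end
end
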